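/- Let I be a finite set, let s ∉ I, let T^α : I → ℝ, and let y : (I ∪ {s}) × (I ∪ {s}) → {0,1} be such that for every i ∈ I, ∑_{j ∈ I ∪ {s}} y(i,j) = 1 and ∑_{j ∈ I ∪ {s}} y(j,i) = 1, and such that y(i,j) = 1 with i, j ∈ I implies T^α(i) < T^α(j). Define σ : I ∪ {s} → I ∪ {s} by σ(s) = s and, for i ∈ I, σ(i) = the unique j with y(i,j) = 1. Then for every i ∈ I there exists a natural number k with 1 ≤ k ≤ |I| such that σ^k(i) = s. -/

import Mathlib

/-- Let `I` be a finite set of trips, `s ∉ I` the garage, `T^α` the start times,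
and `y : (I ∪ {s}) × (I ∪ {s}) → {0,1}` satisfy the degree constraints, with
start times strictly increasing along arcs between trips. If `σ` is the
successor map (`σ s = s`, and for `i ∈ I`, `σ i` is the unique `j ∈ I ∪ {s}`
with `y(i,j) = 1`), then every trip reaches the garage: for all `i ∈ I` there
is `k` with `1 ≤ k ≤ |I|` and `σ^k(i) = s`. -/
theorem runs_terminate_at_garage {V : Type*} [DecidableEq V] (I : Finset V) (s : V)
    (hs : s ∉ I) (Tα : V → ℝ) (y : V → V → ℝ)
    (hbin : ∀ i ∈ insert s I, ∀ j ∈ insert s I, y i j = 0 ∨ y i j = 1)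
    (hout : ∀ i ∈ I, ∑ j ∈ insert s I, y i j = 1)
    (hin : ∀ i ∈ I, ∑ j ∈ insert s I, y j i = 1)
    (hmono : ∀ i ∈ I, ∀ j ∈ I, y i j = 1 → Tα i < Tα j)
    (σ : V → V) (hσs : σ s = s)
    (hσ : ∀ i ∈ I, σ i ∈ insert s I ∧ y i (σ i) = 1) :
    ∀ i ∈ I, ∃ k : ℕ, 1 ≤ k ∧ k ≤ I.card ∧ σ^[k] i = s := by
  classical
  have main : ∀ n : ℕ, ∀ i ∈ I,
      (I.filter (fun j => Tα i ≤ Tα j)).card ≤ n →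
      ∃ k : ℕ, 1 ≤ k ∧ k ≤ (I.filter (fun j => Tα i ≤ Tα j)).card ∧ σ^[k] i = s := by
    intro n
    induction n with
    | zero =>
      intro i hi hcard
      exfalso
      have : i ∈ I.filter (fun j => Tα i ≤ Tα j) := by
        simp [Finset.mem_filter, hi]
      have := Finset.card_pos.mpr ⟨i, this⟩
      omega
    | succ n ih =>
      intro i hi hcard
      have hiF : i ∈ I.filter (fun j => Tα i ≤ Tα j) := by
        simp [Finset.mem_filter, hi]
      have hpos : 1 ≤ (I.filter (fun j => Tα i ≤ Tα j)).card :=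
        Finset.card_pos.mpr ⟨i, hiF⟩
      obtain ⟨hmem, hy⟩ := hσ i hi
      rcases Finset.mem_insert.mp hmem with hgs | hI
      · exact ⟨1, le_refl 1, hpos, by simp [hgs]⟩
      · have hlt : Tα i < Tα (σ i) := hmono i hi (σ i) hI hy
        have hsub : I.filter (fun j => Tα (σ i) ≤ Tα j) ⊂ I.filter (fun j => Tα i ≤ Tα j) := by
          constructor
          · intro x hx
            rw [Finset.mem_filter] at hx ⊢
            exact ⟨hx.1, le_trans hlt.le hx.2⟩
          · intro h
            have := h hiF
            rw [Finset.mem_filter] at this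
            exact absurd this.2 (not_le.mpr hlt)
        have hcard' : (I.filter (fun j => Tα (σ i) ≤ Tα j)).card ≤ n := by
          have := Finset.card_lt_card hsub
          omega
        obtain ⟨k, hk1, hk2, hks⟩ := ih (σ i) hI hcard'
        refine ⟨k + 1, by omega, ?_, ?_⟩
        · have := Finset.card_lt_card hsub
          omega
        · rw [Function.iterate_succ_apply]
          exact hks
  intro i hi
  obtain ⟨k, hk1, hk2, hks⟩ := main (I.filter (fun j => Tα i ≤ Tα j)).card i hi le_rfl
  exact ⟨k, hk1, le_trans hk2 (Finset.card_filter_le _ _), hks⟩
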